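/- Fix a bipartition λ of n with λ^(2) = ∅, and a semistandard tableau S of shape λ and some type μ. Then unstacking after the first row gives a bijection from the set of standard tableaux s of shape λ with μ(s) = S onto the set of standard tableaux s' of shape U(λ) = ((λ_1), (λ_2, ..., λ_ℓ)) with μ(s') = U(S), with inverse given by stacking. -/

import Mathlib

open Finset

/-! STATEMENT 6: For a bipartition `λ = ((λ_1,...,λ_ℓ), ∅)` of `n` and a semistandard
tableau `S` of shape `λ` and type `μ`, unstacking after the first row gives a bijection
(with inverse stacking) between standard tableaux `s` of shape `λ` with `μ(s) = S` and
standard tableaux `s'` of shape `U(λ) = ((λ_1),(λ_2,...,λ_ℓ))` with `μ(s') = U(S)`. -/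

/-- Boxes of the Young diagram of the partition `(λ_1,...,λ_ℓ)` (rows are 1-indexed). -/
def IsBox (lam : ℕ → ℕ) (ℓ : ℕ) (p : ℕ × ℕ) : Prop :=
  1 ≤ p.1 ∧ p.1 ≤ ℓ ∧ 1 ≤ p.2 ∧ p.2 ≤ lam p.1

/-- Boxes of a bipartition whose components have row lengths `sh · 0` and `sh · 1`. -/
def IsBBox (sh : ℕ → Fin 2 → ℕ) (q : (ℕ × ℕ) × Fin 2) : Prop :=
  1 ≤ q.1.1 ∧ 1 ≤ q.1.2 ∧ q.1.2 ≤ sh q.1.1 q.2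

/-- The shape `U(λ) = ((λ_1), (λ_2, ..., λ_ℓ))`. -/
def Ushape (lam : ℕ → ℕ) : ℕ → Fin 2 → ℕ :=
  fun a c => if c = 0 then (if a = 1 then lam 1 else 0) else lam (a + 1)

/-- A standard tableau of (one-component) shape `λ` with entries `1, ..., n`:
an injective filling onto `{1,...,n}` increasing along rows and down columns. -/
def IsStdTab (lam : ℕ → ℕ) (ℓ n : ℕ) (s : ℕ × ℕ → ℕ) : Prop :=
  (∀ p q, IsBox lam ℓ p → IsBox lam ℓ q → s p = s q → p = q) ∧
  (∀ p, IsBox lam ℓ p → 1 ≤ s p ∧ s p ≤ n) ∧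
  (∀ j, 1 ≤ j → j ≤ n → ∃ p, IsBox lam ℓ p ∧ s p = j) ∧
  (∀ a b, IsBox lam ℓ (a, b) → IsBox lam ℓ (a, b + 1) → s (a, b) < s (a, b + 1)) ∧
  (∀ a b, IsBox lam ℓ (a, b) → IsBox lam ℓ (a + 1, b) → s (a, b) < s (a + 1, b))

/-- A standard tableau of bipartition shape `sh`: entries `1,...,n` each once, increasing
along the rows and down the columns of each component. -/
def IsStdBTab (sh : ℕ → Fin 2 → ℕ) (n : ℕ) (s : (ℕ × ℕ) × Fin 2 → ℕ) : Prop :=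
  (∀ p q, IsBBox sh p → IsBBox sh q → s p = s q → p = q) ∧
  (∀ p, IsBBox sh p → 1 ≤ s p ∧ s p ≤ n) ∧
  (∀ j, 1 ≤ j → j ≤ n → ∃ p, IsBBox sh p ∧ s p = j) ∧
  (∀ a b c, IsBBox sh ((a, b), c) → IsBBox sh ((a, b + 1), c) →
    s ((a, b), c) < s ((a, b + 1), c)) ∧
  (∀ a b c, IsBBox sh ((a, b), c) → IsBBox sh ((a + 1, b), c) →
    s ((a, b), c) < s ((a + 1, b), c))

/-- The order on the two-alphabet letters `i_k` (letters of the first alphabet `k = 0`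
come before those of the second `k = 1`, and within an alphabet by index). -/
def letterLE (x y : ℕ × Fin 2) : Prop := x.2 < y.2 ∨ (x.2 = y.2 ∧ x.1 ≤ y.1)

def letterLT (x y : ℕ × Fin 2) : Prop := x.2 < y.2 ∨ (x.2 = y.2 ∧ x.1 < y.1)

/-- Semistandardness for a tableau of shape `λ` with two-alphabet entries:
rows weakly increase, columns strictly increase. -/
def IsSemistdTab (lam : ℕ → ℕ) (ℓ : ℕ) (S : ℕ × ℕ → ℕ × Fin 2) : Prop :=
  (∀ a b, IsBox lam ℓ (a, b) → IsBox lam ℓ (a, b + 1) → letterLE (S (a, b)) (S (a, b + 1))) ∧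
  (∀ a b, IsBox lam ℓ (a, b) → IsBox lam ℓ (a + 1, b) → letterLT (S (a, b)) (S (a + 1, b)))

/-- Unstacking a tableau of shape `λ` to one of shape `U(λ)`. -/
def unstack {α : Type*} (s : ℕ × ℕ → α) : (ℕ × ℕ) × Fin 2 → α :=
  fun q => if q.2 = 0 then s (1, q.1.2) else s (q.1.1 + 1, q.1.2)

/-- Stacking a tableau of shape `U(λ)` back to one of shape `λ`. -/
def stack {α : Type*} (s' : (ℕ × ℕ) × Fin 2 → α) : ℕ × ℕ → α :=
  fun p => if p.1 = 1 then s' ((1, p.2), 0) else s' ((p.1 - 1, p.2), 1)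


/-! Auxiliary lemmas. -/

private lemma fin2cases (a : Fin 2) : a = 0 ∨ a = 1 := by
  fin_cases a <;> simp

private lemma sum_mono1 (f : ℕ → ℕ) {i i' : ℕ} (h : i ≤ i') :
    ∑ x ∈ Finset.Icc 1 i, f x ≤ ∑ x ∈ Finset.Icc 1 i', f x :=
  Finset.sum_le_sum_of_subset (Finset.Icc_subset_Icc_right h)

private lemma gOne_gt (n : ℕ) (μ1 : ℕ → ℕ) (g : ℕ → ℕ × Fin 2)
    (hg0 : ∀ j, 1 ≤ j → j ≤ n → ∀ i : ℕ,
      (g j = (i, 0) ↔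
        (∑ i' ∈ Finset.Icc 1 (i - 1), μ1 i') < j ∧ j ≤ ∑ i' ∈ Finset.Icc 1 i, μ1 i'))
    {j : ℕ} (h1 : 1 ≤ j) (h2 : j ≤ n) (hk : (g j).2 = 1) (i : ℕ) :
    (∑ i' ∈ Finset.Icc 1 i, μ1 i') < j := by
  by_contra hc
  push_neg at hc
  have hex : ∃ i, j ≤ ∑ i' ∈ Finset.Icc 1 i, μ1 i' := ⟨i, hc⟩
  have hP : j ≤ ∑ i' ∈ Finset.Icc 1 (Nat.find hex), μ1 i' := Nat.find_spec hex
  have hi0pos : 1 ≤ Nat.find hex := by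
    rcases Nat.eq_zero_or_pos (Nat.find hex) with h | h
    · exfalso; rw [h] at hP; simp at hP; omega
    · exact h
  have hlt : (∑ i' ∈ Finset.Icc 1 (Nat.find hex - 1), μ1 i') < j := by
    have := Nat.find_min hex (m := Nat.find hex - 1) (by omega)
    omega
  have heg := (hg0 j h1 h2 (Nat.find hex)).mpr ⟨hlt, hP⟩
  rw [heg] at hk
  simp at hk

private lemma g_lt (n : ℕ) (μ1 μ2 : ℕ → ℕ) (g : ℕ → ℕ × Fin 2)
    (hg0 : ∀ j, 1 ≤ j → j ≤ n → ∀ i : ℕ,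
      (g j = (i, 0) ↔
        (∑ i' ∈ Finset.Icc 1 (i - 1), μ1 i') < j ∧ j ≤ ∑ i' ∈ Finset.Icc 1 i, μ1 i'))
    (hg1 : ∀ j, 1 ≤ j → j ≤ n → ∀ i : ℕ,
      (g j = (i, 1) ↔
        ((∑ i' ∈ Finset.Icc 1 n, μ1 i') + ∑ i' ∈ Finset.Icc 1 (i - 1), μ2 i') < j ∧
          j ≤ (∑ i' ∈ Finset.Icc 1 n, μ1 i') + ∑ i' ∈ Finset.Icc 1 i, μ2 i'))
    {j1 j2 : ℕ} (h11 : 1 ≤ j1) (h12 : j1 ≤ n) (h21 : 1 ≤ j2) (h22 : j2 ≤ n)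
    (hlt : letterLT (g j1) (g j2)) : j1 < j2 := by
  rcases fin2cases (g j1).2 with hk1 | hk1 <;> rcases fin2cases (g j2).2 with hk2 | hk2
  · -- both in first alphabet
    have he1 : g j1 = ((g j1).1, (0 : Fin 2)) := by rw [← hk1]
    have he2 : g j2 = ((g j2).1, (0 : Fin 2)) := by rw [← hk2]
    obtain ⟨hb1, hb2⟩ := (hg0 j1 h11 h12 (g j1).1).mp he1
    obtain ⟨hb3, hb4⟩ := (hg0 j2 h21 h22 (g j2).1).mp he2
    have hi : (g j1).1 < (g j2).1 := by
      unfold letterLT at hlt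
      rcases hlt with h | ⟨_, h⟩
      · rw [hk1, hk2] at h; exact absurd h (by simp)
      · exact h
    have := sum_mono1 μ1 (show (g j1).1 ≤ (g j2).1 - 1 by omega)
    omega
  · -- first alphabet vs second alphabet
    have he1 : g j1 = ((g j1).1, (0 : Fin 2)) := by rw [← hk1]
    obtain ⟨hb1, hb2⟩ := (hg0 j1 h11 h12 (g j1).1).mp he1
    have := gOne_gt n μ1 g hg0 h21 h22 hk2 (g j1).1
    omega
  · -- impossible: second alphabet letter strictly less than first alphabet letter
    exfalso
    unfold letterLT at hlt
    rcases hlt with h | ⟨h, _⟩ <;> rw [hk1, hk2] at h <;> exact absurd h (by simp)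
  · -- both in second alphabet
    have he1 : g j1 = ((g j1).1, (1 : Fin 2)) := by rw [← hk1]
    have he2 : g j2 = ((g j2).1, (1 : Fin 2)) := by rw [← hk2]
    obtain ⟨hb1, hb2⟩ := (hg1 j1 h11 h12 (g j1).1).mp he1
    obtain ⟨hb3, hb4⟩ := (hg1 j2 h21 h22 (g j2).1).mp he2
    have hi : (g j1).1 < (g j2).1 := by
      unfold letterLT at hlt
      rcases hlt with h | ⟨_, h⟩
      · rw [hk1, hk2] at h; exact absurd h (by simp)
      · exact h
    have := sum_mono1 μ2 (show (g j1).1 ≤ (g j2).1 - 1 by omega)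
    omega

private lemma bbox0 {lam : ℕ → ℕ} {ℓ : ℕ} (hzero : ∀ a, ℓ < a → lam a = 0)
    {a b : ℕ} : IsBBox (Ushape lam) ((a, b), 0) ↔ a = 1 ∧ IsBox lam ℓ (1, b) := by
  constructor
  · rintro ⟨h1, h2, h3⟩
    dsimp only at h1 h2 h3
    simp only [Ushape] at h3
    by_cases h : a = 1
    · subst h
      simp at h3
      have hl : 1 ≤ ℓ := by
        by_contra hcon
        have := hzero 1 (by omega)
        omega
      exact ⟨rfl, le_refl 1, hl, h2, h3⟩
    · exfalso
      simp [h] at h3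
      omega
  · rintro ⟨rfl, h⟩
    exact ⟨le_refl 1, h.2.2.1, by simpa [Ushape] using h.2.2.2⟩

private lemma bbox1 {lam : ℕ → ℕ} {ℓ : ℕ} (hzero : ∀ a, ℓ < a → lam a = 0)
    {a b : ℕ} : IsBBox (Ushape lam) ((a, b), 1) ↔ 1 ≤ a ∧ IsBox lam ℓ (a + 1, b) := by
  constructor
  · rintro ⟨h1, h2, h3⟩
    dsimp only at h1 h2 h3
    simp only [Ushape] at h3
    simp at h3
    have hl : a + 1 ≤ ℓ := by
      by_contra hcon
      have := hzero (a + 1) (by omega)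
      omega
    exact ⟨h1, by omega, hl, h2, h3⟩
  · rintro ⟨h1, h⟩
    exact ⟨h1, h.2.2.1, by simpa [Ushape] using h.2.2.2⟩

set_option maxHeartbeats 2000000

theorem stmt6 (n ℓ : ℕ) (lam : ℕ → ℕ)
    -- λ = ((λ_1, ..., λ_ℓ), ∅) is a bipartition of n:
    (hpos : ∀ a, 1 ≤ a → a ≤ ℓ → 1 ≤ lam a)
    (hanti : ∀ a, 1 ≤ a → lam (a + 1) ≤ lam a)
    (hzero : ∀ a, ℓ < a → lam a = 0)
    (hsize : ∑ a ∈ Finset.Icc 1 ℓ, lam a = n)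
    -- μ is a bicomposition and g is the recording map of the standard tableau t^μ:
    -- g j is the letter i_k such that j lies in row i of component k of t^μ
    (μ1 μ2 : ℕ → ℕ) (g : ℕ → ℕ × Fin 2)
    (hg0 : ∀ j, 1 ≤ j → j ≤ n → ∀ i : ℕ,
      (g j = (i, 0) ↔
        (∑ i' ∈ Finset.Icc 1 (i - 1), μ1 i') < j ∧ j ≤ ∑ i' ∈ Finset.Icc 1 i, μ1 i'))
    (hg1 : ∀ j, 1 ≤ j → j ≤ n → ∀ i : ℕ,
      (g j = (i, 1) ↔
        ((∑ i' ∈ Finset.Icc 1 n, μ1 i') + ∑ i' ∈ Finset.Icc 1 (i - 1), μ2 i') < j ∧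
          j ≤ (∑ i' ∈ Finset.Icc 1 n, μ1 i') + ∑ i' ∈ Finset.Icc 1 i, μ2 i'))
    -- S is a semistandard tableau of shape λ and type μ:
    (S : ℕ × ℕ → ℕ × Fin 2)
    (hS : IsSemistdTab lam ℓ S)
    (hStype0 : ∀ i, Set.ncard {p | IsBox lam ℓ p ∧ S p = (i, 0)} = μ1 i)
    (hStype1 : ∀ i, Set.ncard {p | IsBox lam ℓ p ∧ S p = (i, 1)} = μ2 i) :
    -- unstacking maps standard tableaux of shape λ recording to S to standard tableaux
    -- of shape U(λ) recording to U(S), and stacking is a two-sided inverse: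
    (∀ s : ℕ × ℕ → ℕ,
      IsStdTab lam ℓ n s → (∀ p, IsBox lam ℓ p → g (s p) = S p) →
      (IsStdBTab (Ushape lam) n (unstack s) ∧
        ∀ q, IsBBox (Ushape lam) q → g (unstack s q) = unstack S q)) ∧
    (∀ s' : (ℕ × ℕ) × Fin 2 → ℕ,
      IsStdBTab (Ushape lam) n s' → (∀ q, IsBBox (Ushape lam) q → g (s' q) = unstack S q) →
      (IsStdTab lam ℓ n (stack s') ∧ ∀ p, IsBox lam ℓ p → g (stack s' p) = S p)) ∧
    (∀ s : ℕ × ℕ → ℕ, IsStdTab lam ℓ n s →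
      ∀ p, IsBox lam ℓ p → stack (unstack s) p = s p) ∧
    (∀ s' : (ℕ × ℕ) × Fin 2 → ℕ, IsStdBTab (Ushape lam) n s' →
      ∀ q, IsBBox (Ushape lam) q → unstack (stack s') q = s' q) := by
  have hb0 : ∀ a b : ℕ, IsBBox (Ushape lam) ((a, b), 0) ↔ a = 1 ∧ IsBox lam ℓ (1, b) :=
    fun a b => bbox0 hzero
  have hb1 : ∀ a b : ℕ, IsBBox (Ushape lam) ((a, b), 1) ↔ 1 ≤ a ∧ IsBox lam ℓ (a + 1, b) :=
    fun a b => bbox1 hzero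
  have key : ∀ j1 j2, 1 ≤ j1 → j1 ≤ n → 1 ≤ j2 → j2 ≤ n → letterLT (g j1) (g j2) → j1 < j2 :=
    fun j1 j2 a b c d h => g_lt n μ1 μ2 g hg0 hg1 a b c d h
  refine ⟨?_, ?_, ?_, ?_⟩
  · -- unstack direction
    intro s hs hgs
    obtain ⟨hinj, hrange, hsurj, hrow, hcol⟩ := hs
    constructor
    · refine ⟨?_, ?_, ?_, ?_, ?_⟩
      · -- injectivity
        rintro ⟨⟨a, b⟩, c⟩ ⟨⟨a', b'⟩, c'⟩ hq hq' heq
        rcases fin2cases c with rfl | rfl <;> rcases fin2cases c' with rfl | rfl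
        · obtain ⟨rfl, hB⟩ := (hb0 a b).mp hq
          obtain ⟨rfl, hB'⟩ := (hb0 a' b').mp hq'
          simp [unstack] at heq
          have h2 := hinj _ _ hB hB' heq
          simp only [Prod.mk.injEq] at h2
          obtain ⟨-, rfl⟩ := h2
          rfl
        · obtain ⟨rfl, hB⟩ := (hb0 a b).mp hq
          obtain ⟨ha', hB'⟩ := (hb1 a' b').mp hq'
          simp [unstack] at heq
          have h2 := hinj _ _ hB hB' heq
          simp only [Prod.mk.injEq] at h2
          omega
        · obtain ⟨ha, hB⟩ := (hb1 a b).mp hq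
          obtain ⟨rfl, hB'⟩ := (hb0 a' b').mp hq'
          simp [unstack] at heq
          have h2 := hinj _ _ hB hB' heq
          simp only [Prod.mk.injEq] at h2
          omega
        · obtain ⟨ha, hB⟩ := (hb1 a b).mp hq
          obtain ⟨ha', hB'⟩ := (hb1 a' b').mp hq'
          simp [unstack] at heq
          have h2 := hinj _ _ hB hB' heq
          simp only [Prod.mk.injEq] at h2
          obtain ⟨h3, rfl⟩ := h2
          have h4 : a = a' := by omega
          subst h4
          rfl
      · -- range
        rintro ⟨⟨a, b⟩, c⟩ hq
        rcases fin2cases c with rfl | rfl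
        · obtain ⟨rfl, hB⟩ := (hb0 a b).mp hq
          simpa [unstack] using hrange _ hB
        · obtain ⟨ha, hB⟩ := (hb1 a b).mp hq
          simpa [unstack] using hrange _ hB
      · -- surjectivity
        intro j hj1 hj2
        obtain ⟨⟨a, b⟩, hB, hsab⟩ := hsurj j hj1 hj2
        have ha1 : 1 ≤ a := hB.1
        by_cases h : a = 1
        · subst h
          exact ⟨((1, b), 0), (hb0 1 b).mpr ⟨rfl, hB⟩, by simpa [unstack] using hsab⟩
        · have e : a - 1 + 1 = a := by omega
          refine ⟨((a - 1, b), 1), (hb1 (a - 1) b).mpr ⟨by omega, by rw [e]; exact hB⟩, ?_⟩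
          simp only [unstack]
          simp only [e]
          simpa using hsab
      · -- rows
        intro a b c hq hq'
        rcases fin2cases c with rfl | rfl
        · obtain ⟨rfl, hB⟩ := (hb0 a b).mp hq
          obtain ⟨-, hB'⟩ := (hb0 1 (b + 1)).mp hq'
          simpa [unstack] using hrow 1 b hB hB'
        · obtain ⟨ha, hB⟩ := (hb1 a b).mp hq
          obtain ⟨-, hB'⟩ := (hb1 a (b + 1)).mp hq'
          simpa [unstack] using hrow (a + 1) b hB hB'
      · -- columns
        intro a b c hq hq'
        rcases fin2cases c with rfl | rfl
        · exfalso
          obtain ⟨h1, hB⟩ := (hb0 (a + 1) b).mp hq'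
          have haa : 1 ≤ a := hq.1
          omega
        · obtain ⟨ha, hB⟩ := (hb1 a b).mp hq
          obtain ⟨-, hB'⟩ := (hb1 (a + 1) b).mp hq'
          simpa [unstack] using hcol (a + 1) b hB hB'
    · -- g compatibility
      rintro ⟨⟨a, b⟩, c⟩ hq
      rcases fin2cases c with rfl | rfl
      · obtain ⟨rfl, hB⟩ := (hb0 a b).mp hq
        simpa [unstack] using hgs _ hB
      · obtain ⟨ha, hB⟩ := (hb1 a b).mp hq
        simpa [unstack] using hgs _ hB
  · -- stack direction
    intro s' hs' hgs'
    obtain ⟨hinj, hrange, hsurj, hrow, hcol⟩ := hs'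
    constructor
    · refine ⟨?_, ?_, ?_, ?_, ?_⟩
      · -- injectivity
        rintro ⟨a, b⟩ ⟨a', b'⟩ hp hp' heq
        have ha : 1 ≤ a := hp.1
        have ha' : 1 ≤ a' := hp'.1
        by_cases h : a = 1 <;> by_cases h' : a' = 1
        · subst h; subst h'
          simp [stack] at heq
          have h2 := hinj _ _ ((hb0 1 b).mpr ⟨rfl, hp⟩) ((hb0 1 b').mpr ⟨rfl, hp'⟩) heq
          simp only [Prod.mk.injEq] at h2
          exact Prod.ext rfl h2.1.2
        · subst h
          have e' : a' - 1 + 1 = a' := by omega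
          simp [stack, h'] at heq
          have := hinj _ _ ((hb0 1 b).mpr ⟨rfl, hp⟩)
            ((hb1 (a' - 1) b').mpr ⟨by omega, by rw [e']; exact hp'⟩) heq
          exact absurd (congrArg Prod.snd this) (by simp)
        · subst h'
          have e : a - 1 + 1 = a := by omega
          simp [stack, h] at heq
          have := hinj _ _ ((hb1 (a - 1) b).mpr ⟨by omega, by rw [e]; exact hp⟩)
            ((hb0 1 b').mpr ⟨rfl, hp'⟩) heq
          exact absurd (congrArg Prod.snd this) (by simp)
        · have e : a - 1 + 1 = a := by omega
          have e' : a' - 1 + 1 = a' := by omega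
          simp [stack, h, h'] at heq
          have := hinj _ _ ((hb1 (a - 1) b).mpr ⟨by omega, by rw [e]; exact hp⟩)
            ((hb1 (a' - 1) b').mpr ⟨by omega, by rw [e']; exact hp'⟩) heq
          simp only [Prod.mk.injEq] at this
          have : a = a' ∧ b = b' := by omega
          exact Prod.ext this.1 this.2
      · -- range
        rintro ⟨a, b⟩ hp
        have ha : 1 ≤ a := hp.1
        by_cases h : a = 1
        · subst h
          simpa [stack] using hrange _ ((hb0 1 b).mpr ⟨rfl, hp⟩)
        · have e : a - 1 + 1 = a := by omega
          have hb : IsBBox (Ushape lam) ((a - 1, b), 1) :=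
            (hb1 (a - 1) b).mpr ⟨by omega, by rw [e]; exact hp⟩
          simpa [stack, h] using hrange _ hb
      · -- surjectivity
        intro j hj1 hj2
        obtain ⟨⟨⟨a, b⟩, c⟩, hq, hval⟩ := hsurj j hj1 hj2
        rcases fin2cases c with rfl | rfl
        · obtain ⟨rfl, hB⟩ := (hb0 a b).mp hq
          exact ⟨(1, b), hB, by simpa [stack] using hval⟩
        · obtain ⟨ha, hB⟩ := (hb1 a b).mp hq
          refine ⟨(a + 1, b), hB, ?_⟩
          have hne : a + 1 ≠ 1 := by omega
          simpa [stack, hne, show a ≠ 0 by omega] using hval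
      · -- rows
        intro a b hp hp'
        have ha : 1 ≤ a := hp.1
        by_cases h : a = 1
        · subst h
          have h1 := (hb0 1 b).mpr ⟨rfl, hp⟩
          have h2 := (hb0 1 (b + 1)).mpr ⟨rfl, hp'⟩
          simpa [stack] using hrow 1 b 0 h1 h2
        · have e : a - 1 + 1 = a := by omega
          have h1 : IsBBox (Ushape lam) ((a - 1, b), 1) :=
            (hb1 _ _).mpr ⟨by omega, by rw [e]; exact hp⟩
          have h2 : IsBBox (Ushape lam) ((a - 1, b + 1), 1) :=
            (hb1 _ _).mpr ⟨by omega, by rw [e]; exact hp'⟩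
          simpa [stack, h] using hrow (a - 1) b 1 h1 h2
      · -- columns
        intro a b hp hp'
        have ha : 1 ≤ a := hp.1
        by_cases h : a = 1
        · subst h
          -- the junction: uses the recording map
          have h1 : IsBBox (Ushape lam) ((1, b), 0) := (hb0 1 b).mpr ⟨rfl, hp⟩
          have h2 : IsBBox (Ushape lam) ((1, b), 1) := (hb1 1 b).mpr ⟨le_refl 1, hp'⟩
          have hg1' := hgs' _ h1
          have hg2' := hgs' _ h2
          simp only [unstack] at hg1' hg2'
          simp at hg1' hg2'
          have hltS : letterLT (S (1, b)) (S (1 + 1, b)) := hS.2 1 b hp hp'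
          have hr1 := hrange _ h1
          have hr2 := hrange _ h2
          have hj := key _ _ hr1.1 hr1.2 hr2.1 hr2.2
            (by rw [hg1', hg2']; simpa using hltS)
          simpa [stack] using hj
        · have e : a - 1 + 1 = a := by omega
          have h1 : IsBBox (Ushape lam) ((a - 1, b), 1) :=
            (hb1 _ _).mpr ⟨by omega, by rw [e]; exact hp⟩
          have h2 : IsBBox (Ushape lam) ((a - 1 + 1, b), 1) :=
            (hb1 _ _).mpr ⟨by omega, by rw [show a - 1 + 1 + 1 = a + 1 by omega]; exact hp'⟩
          have hc := hcol (a - 1) b 1 h1 h2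
          rw [e] at hc
          have hne : a + 1 ≠ 1 := by omega
          simpa [stack, h, hne, show a ≠ 0 by omega] using hc
    · -- g compatibility for stack
      rintro ⟨a, b⟩ hp
      have ha : 1 ≤ a := hp.1
      by_cases h : a = 1
      · subst h
        have h1 := (hb0 1 b).mpr ⟨rfl, hp⟩
        have := hgs' _ h1
        simpa [stack, unstack] using this
      · have e : a - 1 + 1 = a := by omega
        have h1 : IsBBox (Ushape lam) ((a - 1, b), 1) :=
          (hb1 _ _).mpr ⟨by omega, by rw [e]; exact hp⟩
        have := hgs' _ h1
        simp only [unstack] at this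
        simp only [e] at this
        simp at this
        simpa [stack, h] using this
  · -- stack ∘ unstack = id
    intro s _ p hp
    obtain ⟨a, b⟩ := p
    have ha : 1 ≤ a := hp.1
    by_cases h : a = 1
    · subst h
      simp [stack, unstack]
    · have e : a - 1 + 1 = a := by omega
      simp only [stack, unstack, if_neg h]
      simp only [e]
      simp
  · -- unstack ∘ stack = id
    rintro s' _ ⟨⟨a, b⟩, c⟩ hq
    rcases fin2cases c with rfl | rfl
    · obtain ⟨rfl, hB⟩ := (hb0 a b).mp hq
      simp [stack, unstack]
    · have ha : 1 ≤ a := hq.1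
      have hne : a + 1 ≠ 1 := by omega
      simp [stack, unstack, hne, show a ≠ 0 by omega]
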